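/- arXiv:2405.15511 — 3 statements merged into one kernel-verified Lean document; each statement's English description precedes it below -/
import Mathlib

section
/- In the category of topological spaces, the pushout of the span ℝ ← (0,1) → ℝ, in which both legs are the subspace inclusion of the open interval (0,1) into ℝ, is not a Hausdorff space. (Hence this span of connected 1-manifolds of the same dimension, with open injective legs, has no pushout in the category of manifolds.) -/
open CategoryTheory Limits

noncomputable section

/-- The inclusion `(0,1) ↪ ℝ` of the open unit interval, as a morphism in `TopCat`. -/
def iooIncl : TopCat.of (Set.Ioo (0 : ℝ) 1) ⟶ TopCat.of ℝ :=
  TopCat.ofHom ⟨Subtype.val, continuous_subtype_val⟩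

/-- `Bool` with the indiscrete topology, as an object of `TopCat`. -/
def indBool : TopCat := @TopCat.of Prop ⊤

/-- The indicator of `(0,1)`, continuous into the indiscrete space. -/
def fmap : TopCat.of ℝ ⟶ indBool :=
  letI : TopologicalSpace Prop := ⊤; TopCat.ofHom ⟨fun x => x ∈ Set.Ioo (0 : ℝ) 1, continuous_top⟩

/-- The constant `true` map. -/
def gmap : TopCat.of ℝ ⟶ indBool :=
  letI : TopologicalSpace Prop := ⊤; TopCat.ofHom ⟨fun _ => True, continuous_top⟩

lemma comm_sq : iooIncl ≫ fmap = iooIncl ≫ gmap := by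
  ext ⟨x, hx⟩
  show ((x ∈ Set.Ioo (0:ℝ) 1) = True)
  simp [hx]

/-- The pushout in `TopCat` of the span `ℝ ← (0,1) → ℝ` (both legs the inclusion)
is not Hausdorff; hence this span of connected 1-manifolds has no pushout in the
category of manifolds. -/
theorem pushout_along_open_interval_not_t2 :
    ¬ T2Space ↥(pushout iooIncl iooIncl) := by
  intro h
  -- the two legs agree on (0,1)
  have hagree : ∀ x : ℝ, x ∈ Set.Ioo (0 : ℝ) 1 →
      (pushout.inl iooIncl iooIncl) x
        = (pushout.inr iooIncl iooIncl) x := by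
    intro x hx
    have := pushout.condition (f := iooIncl) (g := iooIncl)
    have := congrArg (fun (k : TopCat.of (Set.Ioo (0:ℝ) 1) ⟶ pushout iooIncl iooIncl) =>
      k ⟨x, hx⟩) this
    exact this
  -- the agreement set is closed
  have hclosed : IsClosed {x : ℝ |
      (pushout.inl iooIncl iooIncl) x
        = (pushout.inr iooIncl iooIncl) x} :=
    isClosed_eq (pushout.inl iooIncl iooIncl).hom.continuous
      (pushout.inr iooIncl iooIncl).hom.continuous
  have hsub : Set.Ioo (0:ℝ) 1 ⊆ {x : ℝ |
      (pushout.inl iooIncl iooIncl) x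
        = (pushout.inr iooIncl iooIncl) x} := hagree
  have h0 : (0 : ℝ) ∈ {x : ℝ |
      (pushout.inl iooIncl iooIncl) x
        = (pushout.inr iooIncl iooIncl) x} := by
    have : closure (Set.Ioo (0:ℝ) 1) ⊆ _ := hclosed.closure_subset_iff.mpr hsub
    exact this (by rw [closure_Ioo one_ne_zero.symm]; exact ⟨le_refl 0, zero_le_one⟩)
  -- but they differ at 0
  have hdesc := pushout.desc fmap gmap comm_sq
  have h1 : (pushout.desc fmap gmap comm_sq)
      ((pushout.inl iooIncl iooIncl) ((0:ℝ))) = fmap ((0:ℝ)) := by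
    have := pushout.inl_desc fmap gmap comm_sq
    exact congrArg (fun (k : TopCat.of ℝ ⟶ indBool) => k ((0:ℝ))) this
  have h2 : (pushout.desc fmap gmap comm_sq)
      ((pushout.inr iooIncl iooIncl) ((0:ℝ))) = gmap ((0:ℝ)) := by
    have := pushout.inr_desc fmap gmap comm_sq
    exact congrArg (fun (k : TopCat.of ℝ ⟶ indBool) => k ((0:ℝ))) this
  rw [h0] at h1
  rw [h1] at h2
  have h3 : (((0:ℝ) ∈ Set.Ioo (0:ℝ) 1) = True) := h2
  simp at h3
end
end

section
/- Let k be a field, A = k[t] the polynomial ring, and K = Frac(A) its field of fractions. Let u : Spec K → Spec A be the morphism of schemes induced by the canonical inclusion A → K, and let f, g : Spec K → Spec A ⨿ Spec A be the composites of u with the two coproduct inclusions into the coproduct Spec A ⨿ Spec A in the category of schemes. Then the parallel pair (f, g) has no coequalizer in the category of schemes. (In particular, the category of schemes is not cocomplete.) -/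
open CategoryTheory Limits AlgebraicGeometry

noncomputable section

/-- The morphism `Spec K → Spec A` induced by the inclusion of `A = k[t]` into its
fraction field `K = k(t)`. -/
def genericPointIncl (k : Type) [Field k] :
    Spec (CommRingCat.of (FractionRing (Polynomial k))) ⟶ Spec (CommRingCat.of (Polynomial k)) :=
  Spec.map (CommRingCat.ofHom (algebraMap (Polynomial k) (FractionRing (Polynomial k))))

namespace NoCoeqAux

private lemma bool3 {i j k : Bool} (hij : i ≠ j) (hik : i ≠ k) (hjk : j ≠ k) : False := by
  cases i <;> cases j <;> cases k <;> simp_all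

/-- Glue data for two copies of `X` glued along the open `W`. -/
def dgd' (X : Scheme) (W : X.Opens) : CategoryTheory.GlueData' Scheme where
  J := Bool
  U _ := X
  V _ _ _ := W
  f _ _ _ := W.ι
  t _ _ _ := 𝟙 _
  t' _ _ _ hij hik hjk := (bool3 hij hik hjk).elim
  t_fac _ _ _ hij hik hjk := (bool3 hij hik hjk).elim
  t_inv _ _ _ := Category.comp_id _
  cocycle _ _ _ hij hik hjk := (bool3 hij hik hjk).elim

/-- The scheme-glue-data of two copies of `X` glued along `W`. -/
def dgd (X : Scheme) (W : X.Opens) : Scheme.GlueData where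
  __ := CategoryTheory.GlueData.ofGlueData' (dgd' X W)
  f_open i j := by
    dsimp only [CategoryTheory.GlueData.ofGlueData', CategoryTheory.GlueData'.f', dgd']
    split <;> infer_instance

lemma dgd_V_tf (X : Scheme) (W : X.Opens) : (dgd X W).V (true, false) = W.toScheme := by
  simp [dgd, CategoryTheory.GlueData.ofGlueData', dgd']

lemma dgd_V_ft (X : Scheme) (W : X.Opens) : (dgd X W).V (false, true) = W.toScheme := by
  simp [dgd, CategoryTheory.GlueData.ofGlueData', dgd']

lemma dgd_f_tf (X : Scheme) (W : X.Opens) :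
    (dgd X W).f true false = eqToHom (dgd_V_tf X W) ≫ W.ι := by
  dsimp only [dgd, CategoryTheory.GlueData.ofGlueData', CategoryTheory.GlueData'.f', dgd']
  exact dif_neg (by decide : (true : Bool) ≠ false)

lemma dgd_f_ft (X : Scheme) (W : X.Opens) :
    (dgd X W).f false true = eqToHom (dgd_V_ft X W) ≫ W.ι := by
  dsimp only [dgd, CategoryTheory.GlueData.ofGlueData', CategoryTheory.GlueData'.f', dgd']
  exact dif_neg (by decide : (false : Bool) ≠ true)

lemma dgd_t_tf (X : Scheme) (W : X.Opens) :
    (dgd X W).t true false = eqToHom ((dgd_V_tf X W).trans (dgd_V_ft X W).symm) := by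
  dsimp only [dgd, CategoryTheory.GlueData.ofGlueData', CategoryTheory.GlueData'.f', dgd']
  refine (dif_neg (by decide : (true : Bool) ≠ false)).trans ?_
  simp

lemma dgd_ι_comp (X : Scheme) (W : X.Opens) :
    W.ι ≫ (dgd X W).ι true = W.ι ≫ (dgd X W).ι false := by
  have h := (dgd X W).glue_condition true false
  rw [dgd_f_tf, dgd_f_ft, dgd_t_tf] at h
  erw [Category.assoc, eqToHom_trans_assoc] at h
  have h1 : eqToHom ((dgd_V_tf X W).trans ((dgd_V_ft X W).symm.trans (dgd_V_ft X W))) =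
      eqToHom (dgd_V_tf X W) := by congr 1
  rw [h1] at h
  exact ((cancel_epi (eqToHom (dgd_V_tf X W))).mp h).symm

lemma dgd_ι_ne (X : Scheme) (W : X.Opens) (x : X) (hx : x ∉ W) :
    ((dgd X W).ι true).base x ≠ ((dgd X W).ι false).base x := by
  intro h
  have := ((dgd X W).ι_eq_iff true false x x).mp h
  rcases this with ⟨z, hz, -⟩
  · apply hx
    rw [dgd_f_tf X W] at hz
    dsimp only at hz
    rw [← hz]
    erw [Scheme.Hom.comp_apply]
    have hr : W.ι.base ((eqToHom (dgd_V_tf X W)).base z) ∈ Set.range W.ι.base :=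
      Set.mem_range_self _
    rwa [Scheme.Opens.range_ι] at hr

variable (k : Type) [Field k]

abbrev XX : Scheme := Spec (CommRingCat.of (Polynomial k))

/-- the generic point -/
def eta : XX k := (⊥ : PrimeSpectrum (Polynomial k))

lemma u_base (pt : Spec (CommRingCat.of (FractionRing (Polynomial k)))) :
    (genericPointIncl k).base pt = eta k := by
  obtain rfl : pt = (⟨⊥, Ideal.bot_prime⟩ : PrimeSpectrum (FractionRing (Polynomial k))) :=
    Subsingleton.elim _ _
  show PrimeSpectrum.comap _ _ = _
  refine PrimeSpectrum.ext ?_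
  show Ideal.comap _ ⊥ = ⊥
  exact Ideal.comap_bot_of_injective _
    (IsFractionRing.injective (Polynomial k) (FractionRing (Polynomial k)))

lemma denseRange_u : DenseRange (genericPointIncl k).base := by
  intro x
  have h : (⊥ : PrimeSpectrum (Polynomial k)) ⤳ x :=
    (PrimeSpectrum.le_iff_specializes _ _).mp bot_le
  have hx : (x : PrimeSpectrum (Polynomial k)) ∈
      closure {(⊥ : PrimeSpectrum (Polynomial k))} :=
    specializes_iff_mem_closure.mp h
  refine closure_mono ?_ hx
  rintro y hy
  replace hy := Set.mem_singleton_iff.mp hy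
  subst hy
  exact ⟨default, u_base k default⟩

instance : IsDominant (genericPointIncl k) := ⟨denseRange_u k⟩

/-- every open neighbourhood of the generic point contains a closed point ≠ η -/
lemma exists_closed_point (W : (XX k).Opens) (hηW : eta k ∈ W) :
    ∃ x : XX k, x ∈ W ∧ x ≠ eta k ∧ IsClosed ({x} : Set (XX k)) := by
  obtain ⟨S, ⟨f0, rfl⟩, hηS0, hSW0⟩ :=
    PrimeSpectrum.isTopologicalBasis_basic_opens.exists_subset_of_mem_open hηW W.2
  let f : Polynomial k := f0
  have hηS : f ∉ (⊥ : Ideal (Polynomial k)) := hηS0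
  have hSW : ∀ y : PrimeSpectrum (Polynomial k), f ∉ y.asIdeal → y ∈ W := fun y hy => hSW0 hy
  have hf : f ≠ 0 := fun h => hηS (by simp [h])
  set g : Polynomial k := f * Polynomial.X + 1 with hg
  have h0 : (0 : WithBot ℕ) ≤ f.degree := Polynomial.zero_le_degree_iff.mpr hf
  have hdeg : g.degree = f.degree + 1 := by
    rw [hg]
    rw [Polynomial.degree_add_eq_left_of_degree_lt, Polynomial.degree_mul, Polynomial.degree_X]
    rw [Polynomial.degree_mul, Polynomial.degree_X, Polynomial.degree_one]
    calc (0 : WithBot ℕ) < 0 + 1 := by norm_num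
    _ ≤ f.degree + 1 := by gcongr
  have honele : (1 : WithBot ℕ) ≤ g.degree := by
    rw [hdeg]
    calc (1 : WithBot ℕ) = 0 + 1 := by norm_num
    _ ≤ f.degree + 1 := by gcongr
  have hgu : ¬ IsUnit g := by
    intro h
    rw [Polynomial.isUnit_iff_degree_eq_zero] at h
    rw [h] at honele
    norm_num at honele
  have hg0 : g ≠ 0 := by
    intro h
    rw [h, Polynomial.degree_zero] at honele
    exact absurd honele (by norm_num)
  obtain ⟨q, hq, hdvd⟩ := WfDvdMonoid.exists_irreducible_factor hgu hg0
  have hqp : Prime q := hq.prime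
  refine ⟨⟨Ideal.span {q}, (Ideal.span_singleton_prime hqp.ne_zero).mpr hqp⟩, ?_, ?_, ?_⟩
  · refine hSW _ ?_
    intro hmem
    rw [Ideal.mem_span_singleton] at hmem
    have h1 : q ∣ (1 : Polynomial k) := by
      have h3 : q ∣ f * Polynomial.X := hmem.mul_right _
      have h2 : g - f * Polynomial.X = 1 := by rw [hg]; ring
      calc q ∣ g - f * Polynomial.X := dvd_sub hdvd h3
      _ = 1 := h2
    exact hq.not_isUnit (isUnit_of_dvd_one h1)
  · intro h
    have h2 : Ideal.span {q} = (⊥ : Ideal (Polynomial k)) := congrArg PrimeSpectrum.asIdeal h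
    rw [Ideal.span_singleton_eq_bot] at h2
    exact hqp.ne_zero h2
  · refine (PrimeSpectrum.isClosed_singleton_iff_isMaximal _).mpr ?_
    exact PrincipalIdealRing.isMaximal_of_irreducible (R := Polynomial k) hq

end NoCoeqAux

open NoCoeqAux

/-- The parallel pair `Spec k(t) ⇉ Spec k[t] ⨿ Spec k[t]`, given by composing the
generic-point inclusion with the two coproduct inclusions, has no coequalizer in the
category of schemes.  In particular, the category of schemes is not cocomplete. -/
theorem no_coequalizer_of_doubled_affine_line (k : Type) [Field k] :
    ¬ HasCoequalizer
      (genericPointIncl k ≫ (coprod.inl : Spec (CommRingCat.of (Polynomial k)) ⟶ _))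
      (genericPointIncl k ≫ (coprod.inr : Spec (CommRingCat.of (Polynomial k)) ⟶
        Spec (CommRingCat.of (Polynomial k)) ⨿ Spec (CommRingCat.of (Polynomial k)))) := by
  intro H
  set X : Scheme := Spec (CommRingCat.of (Polynomial k)) with hX
  set u : Spec (CommRingCat.of (FractionRing (Polynomial k))) ⟶ X := genericPointIncl k with hu
  set fm : _ ⟶ X ⨿ X := u ≫ coprod.inl with hfm
  set gm : _ ⟶ X ⨿ X := u ≫ coprod.inr with hgm
  set Q : Scheme := coequalizer fm gm with hQ
  set c : X ⨿ X ⟶ Q := coequalizer.π fm gm with hc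
  set p₁ : X ⟶ Q := coprod.inl ≫ c with hp₁
  set p₂ : X ⟶ Q := coprod.inr ≫ c with hp₂
  have hcond : u ≫ p₁ = u ≫ p₂ := by
    have h := coequalizer.condition fm gm
    rw [hp₁, hp₂, ← Category.assoc, ← Category.assoc, ← hfm, ← hgm]
    exact h
  -- factorization property of the coequalizer
  have hfact : ∀ (Z : Scheme) (a b : X ⟶ Z), u ≫ a = u ≫ b →
      ∃ h : Q ⟶ Z, p₁ ≫ h = a ∧ p₂ ≫ h = b := by
    intro Z a b hab
    have hco : fm ≫ coprod.desc a b = gm ≫ coprod.desc a b := by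
      rw [hfm, hgm, Category.assoc, Category.assoc, coprod.inl_desc, coprod.inr_desc]
      exact hab
    refine ⟨coequalizer.desc _ hco, ?_, ?_⟩
    · rw [hp₁, Category.assoc, hc, coequalizer.π_desc, coprod.inl_desc]
    · rw [hp₂, Category.assoc, hc, coequalizer.π_desc, coprod.inr_desc]
  -- the image of the generic point
  have hη1 : p₁.base (eta k) = p₂.base (eta k) := by
    have h := congrArg (fun m : Spec (CommRingCat.of (FractionRing (Polynomial k))) ⟶ Q =>
      m.base default) hcond
    simp only [Scheme.Hom.comp_apply] at h
    rw [hu, u_base] at h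
    exact h
  set ξ : Q := p₁.base (eta k) with hξdef
  set V : Scheme := Q.affineCover.X (Q.affineCover.idx ξ) with hV
  set j : V ⟶ Q := Q.affineCover.f (Q.affineCover.idx ξ) with hj
  have hξ : ξ ∈ Set.range j.base := Q.affineCover.covers ξ
  set W : X.Opens := p₁ ⁻¹ᵁ j.opensRange ⊓ p₂ ⁻¹ᵁ j.opensRange with hW
  have hηW : eta k ∈ W := by
    constructor
    · show p₁.base (eta k) ∈ Set.range j.base
      exact hξ
    · show p₂.base (eta k) ∈ Set.range j.base
      rw [← hη1]; exact hξ
  -- lift p₁, p₂ on W to the affine chart V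
  have hmemW : ∀ w : W.toScheme, W.ι.base w ∈ W := by
    intro w
    have h0 : W.ι.base w ∈ Set.range W.ι.base := Set.mem_range_self _
    rwa [Scheme.Opens.range_ι] at h0
  have hsub1 : Set.range (W.ι ≫ p₁).base ⊆ Set.range j.base := by
    rintro y ⟨w, rfl⟩
    rw [Scheme.Hom.comp_apply]
    exact (hmemW w).1
  have hsub2 : Set.range (W.ι ≫ p₂).base ⊆ Set.range j.base := by
    rintro y ⟨w, rfl⟩
    rw [Scheme.Hom.comp_apply]
    exact (hmemW w).2
  set q₁ : W.toScheme ⟶ V := IsOpenImmersion.lift j (W.ι ≫ p₁) hsub1 with hq₁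
  set q₂ : W.toScheme ⟶ V := IsOpenImmersion.lift j (W.ι ≫ p₂) hsub2 with hq₂
  have fac₁ : q₁ ≫ j = W.ι ≫ p₁ := IsOpenImmersion.lift_fac j (W.ι ≫ p₁) hsub1
  have fac₂ : q₂ ≫ j = W.ι ≫ p₂ := IsOpenImmersion.lift_fac j (W.ι ≫ p₂) hsub2
  -- lift u to W
  have hsubu : Set.range u.base ⊆ Set.range W.ι.base := by
    rintro y ⟨pt, rfl⟩
    rw [u_base, Scheme.Opens.range_ι]
    exact hηW
  set uW : Spec (CommRingCat.of (FractionRing (Polynomial k))) ⟶ W.toScheme :=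
    IsOpenImmersion.lift W.ι u hsubu with huW
  have facu : uW ≫ W.ι = u := IsOpenImmersion.lift_fac W.ι u hsubu
  haveI hdm : IsDominant (uW ≫ W.ι) := by rw [facu, hu]; infer_instance
  haveI : IsDominant uW := IsDominant.of_comp_of_isOpenImmersion uW W.ι
  haveI : IsAffine V := by rw [hV]; dsimp [Scheme.affineCover]; infer_instance
  haveI : IsDomain (CommRingCat.of (Polynomial k) : Type) := inferInstanceAs (IsDomain (Polynomial k))
  haveI : AlgebraicGeometry.IsIntegral X := inferInstance
  haveI : AlgebraicGeometry.IsReduced W.toScheme := inferInstance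
  have hq12 : q₁ = q₂ := by
    apply ext_of_isDominant uW
    have h : uW ≫ q₁ ≫ j = uW ≫ q₂ ≫ j := by
      rw [fac₁, fac₂]
      calc uW ≫ W.ι ≫ p₁ = (uW ≫ W.ι) ≫ p₁ := by rw [Category.assoc]
      _ = u ≫ p₁ := by rw [facu]
      _ = u ≫ p₂ := hcond
      _ = (uW ≫ W.ι) ≫ p₂ := by rw [facu]
      _ = uW ≫ W.ι ≫ p₂ := by rw [Category.assoc]
    have h' : (uW ≫ q₁) ≫ j = (uW ≫ q₂) ≫ j := by
      rw [Category.assoc, Category.assoc]; exact h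
    exact (cancel_mono j).mp h'
  -- hence p₁, p₂ agree pointwise on W
  have hagree : ∀ x : X, x ∈ W → p₁.base x = p₂.base x := by
    intro x hx
    have hx' : x ∈ Set.range W.ι.base := by rw [Scheme.Opens.range_ι]; exact hx
    obtain ⟨w, rfl⟩ := hx'
    have e1 := congrArg (fun m : W.toScheme ⟶ Q => m.base w) fac₁
    have e2 := congrArg (fun m : W.toScheme ⟶ Q => m.base w) fac₂
    simp only [Scheme.Hom.comp_apply] at e1 e2
    rw [← e1, ← e2, hq12]
  -- pick a closed point of W distinct from the generic point
  obtain ⟨x, hxW, hxη, hxcl⟩ := exists_closed_point k W hηW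
  -- glue two copies of X along the complement of x
  set Wx : X.Opens := ⟨{x}ᶜ, hxcl.isOpen_compl⟩ with hWx
  set a : X ⟶ (dgd X Wx).glued := (dgd X Wx).ι true with ha
  set b : X ⟶ (dgd X Wx).glued := (dgd X Wx).ι false with hb
  have hsubx : Set.range u.base ⊆ Set.range Wx.ι.base := by
    rintro y ⟨pt, rfl⟩
    rw [u_base, Scheme.Opens.range_ι]
    show eta k ∈ ({x}ᶜ : Set X)
    simp only [Set.mem_compl_iff, Set.mem_singleton_iff]
    exact fun h => hxη h.symm
  set ux : Spec (CommRingCat.of (FractionRing (Polynomial k))) ⟶ Wx.toScheme :=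
    IsOpenImmersion.lift Wx.ι u hsubx with hux
  have facux : ux ≫ Wx.ι = u := IsOpenImmersion.lift_fac Wx.ι u hsubx
  have huab : u ≫ a = u ≫ b := by
    rw [← facux, Category.assoc, Category.assoc, ha, hb, dgd_ι_comp]
  obtain ⟨h, hha, hhb⟩ := hfact _ a b huab
  have hxa : a.base x = b.base x := by
    have e1 := congrArg (fun m : X ⟶ (dgd X Wx).glued => m.base x) hha
    have e2 := congrArg (fun m : X ⟶ (dgd X Wx).glued => m.base x) hhb
    simp only [Scheme.Hom.comp_apply] at e1 e2
    rw [← e1, ← e2, hagree x hxW]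
  exact dgd_ι_ne X Wx x (by simp [hWx]) hxa
end
end

section
/- Let W = {(z, w) ∈ ℂ × ℂ : z = 0 or w = 0}, with the subspace topology from ℂ × ℂ. There is no open neighborhood U of (0,0) in W such that U is homeomorphic to an open subset of ℂ. (In particular, the pushout of the span ℂ ← {0} → ℂ, which is the wedge of two complex lines meeting at the origin, is not a complex manifold, so the category of complex manifolds does not have all pushouts.) -/
lemma punctured_ball_preconnected (v₀ : ℂ) {ε : ℝ} (hε : 0 < ε) :
    IsPreconnected (Metric.ball v₀ ε \ {v₀}) := by
  have hrank : 1 < Module.rank ℝ ℂ := by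
    rw [Complex.rank_real_complex]; norm_num
  set S := Metric.sphere v₀ (ε / 2) with hS
  have hSconn : IsPreconnected S := isPreconnected_sphere hrank v₀ (ε / 2)
  set T : Metric.sphere (0 : ℂ) 1 → Set ℂ :=
    fun u => ((fun t : ℝ => v₀ + t • (u : ℂ)) '' Set.Ioo 0 ε) ∪ S with hT
  have hSsub : S ⊆ Metric.ball v₀ ε \ {v₀} := by
    intro v hv
    rw [hS, Metric.mem_sphere] at hv
    constructor
    · rw [Metric.mem_ball, hv]; linarith
    · simp only [Set.mem_singleton_iff]
      intro hveq
      rw [hveq, dist_self] at hv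
      linarith
  have key : Metric.ball v₀ ε \ {v₀} = ⋃ u, T u := by
    ext v
    constructor
    · rintro ⟨hv, hv'⟩
      have hvne : v ≠ v₀ := by simpa using hv'
      have ht : 0 < ‖v - v₀‖ := by simpa [sub_eq_zero] using hvne
      have htε : ‖v - v₀‖ < ε := by
        simpa [Metric.mem_ball, dist_eq_norm] using hv
      have humem : (‖v - v₀‖⁻¹ • (v - v₀)) ∈ Metric.sphere (0 : ℂ) 1 := by
        have h1 : ‖‖v - v₀‖⁻¹ • (v - v₀)‖ = 1 := by
          rw [norm_smul, norm_inv, norm_norm, inv_mul_cancel₀ ht.ne']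
        simpa [Metric.mem_sphere, dist_zero_right] using h1
      refine Set.mem_iUnion.2 ⟨⟨_, humem⟩, Or.inl ⟨‖v - v₀‖, ⟨ht, htε⟩, ?_⟩⟩
      simp only [smul_smul, mul_inv_cancel₀ ht.ne', one_smul]
      abel
    · intro hv
      obtain ⟨u, hu⟩ := Set.mem_iUnion.1 hv
      rcases hu with hray | hsph
      · obtain ⟨t, ⟨ht0, htε⟩, rfl⟩ := hray
        have hnorm : ‖(t : ℝ) • (u : ℂ)‖ = t := by
          have := u.2
          rw [Metric.mem_sphere, dist_zero_right] at this
          rw [norm_smul, this, mul_one, Real.norm_eq_abs, abs_of_pos ht0]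
        constructor
        · rw [Metric.mem_ball, dist_eq_norm, add_sub_cancel_left, hnorm]
          exact htε
        · simp only [Set.mem_singleton_iff]
          intro hcontra
          have : ‖(t : ℝ) • (u : ℂ)‖ = 0 := by
            have : (t : ℝ) • (u : ℂ) = 0 := by linear_combination hcontra
            simp [this]
          rw [hnorm] at this; linarith
      · exact hSsub hsph
  rw [key]
  apply isPreconnected_iUnion
  · refine ⟨v₀ + (ε / 2 : ℝ) • (1 : ℂ), Set.mem_iInter.2 fun u => Or.inr ?_⟩
    rw [hS, Metric.mem_sphere, dist_eq_norm]
    simp [norm_smul, abs_of_pos hε]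
  · intro u
    apply IsPreconnected.union (v₀ + (ε / 2 : ℝ) • (u : ℂ))
    · exact ⟨ε / 2, ⟨by linarith, by linarith⟩, rfl⟩
    · have hu1 : ‖(u : ℂ)‖ = 1 := by
        have := u.2; rwa [Metric.mem_sphere, dist_zero_right] at this
      rw [hS, Metric.mem_sphere, dist_eq_norm]
      simp [norm_smul, hu1, abs_of_pos hε]
    · exact (isPreconnected_Ioo).image _ (Continuous.continuousOn (by continuity))
    · exact hSconn

/-- The union of the two coordinate axes in `ℂ²`, i.e. the wedge of two complex lines
meeting at the origin. -/
def axesWedge : Set (ℂ × ℂ) := {p | p.1 = 0 ∨ p.2 = 0}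

theorem origin_mem_axesWedge : ((0 : ℂ), (0 : ℂ)) ∈ axesWedge := Or.inl rfl

/-- No open neighborhood of the origin in `W = {(z,w) : z = 0 or w = 0} ⊆ ℂ²` is
homeomorphic to an open subset of `ℂ`; in particular the pushout `ℂ ∨ ℂ` of the span
`ℂ ← {0} → ℂ` is not a complex manifold. -/
theorem axesWedge_origin_has_no_complex_euclidean_nbhd :
    ¬ ∃ U : Set axesWedge, IsOpen U ∧
      (⟨((0 : ℂ), (0 : ℂ)), origin_mem_axesWedge⟩ : axesWedge) ∈ U ∧
      ∃ V : Set ℂ, IsOpen V ∧ Nonempty (↥U ≃ₜ ↥V) := by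
  rintro ⟨U, hU, hx₀U, V, hV, ⟨h⟩⟩
  classical
  set x₀ : axesWedge := ⟨((0 : ℂ), (0 : ℂ)), origin_mem_axesWedge⟩ with hx₀
  set v₀ : ℂ := (h ⟨x₀, hx₀U⟩ : ℂ) with hv₀
  have hv₀V : v₀ ∈ V := (h ⟨x₀, hx₀U⟩).2
  obtain ⟨ε, hε, hB⟩ := Metric.isOpen_iff.1 hV v₀ hv₀V
  set B := Metric.ball v₀ ε with hBdef
  -- the map from the ball back into ℂ × ℂ
  set φ : ℂ → ℂ × ℂ :=
    fun v => if hv : v ∈ B then (((h.symm ⟨v, hB hv⟩ : ↥U) : axesWedge) : ℂ × ℂ) else 0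
    with hφ
  have hφval : ∀ v (hv : v ∈ B), φ v = (((h.symm ⟨v, hB hv⟩ : ↥U) : axesWedge) : ℂ × ℂ) :=
    fun v hv => dif_pos hv
  have hφW : ∀ v ∈ B, φ v ∈ axesWedge := by
    intro v hv
    rw [hφval v hv]
    exact (((h.symm ⟨v, hB hv⟩ : ↥U) : axesWedge)).2
  have hφv₀ : φ v₀ = ((0 : ℂ), (0 : ℂ)) := by
    rw [hφval v₀ (Metric.mem_ball_self hε)]
    have : (⟨v₀, hB (Metric.mem_ball_self hε)⟩ : ↥V) = h ⟨x₀, hx₀U⟩ := Subtype.ext rfl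
    rw [this, h.symm_apply_apply]
  have hφcont : ContinuousOn φ B := by
    rw [continuousOn_iff_continuous_restrict]
    have : B.restrict φ =
        fun v : B => (((h.symm (Set.inclusion hB v) : ↥U) : axesWedge) : ℂ × ℂ) := by
      funext v
      exact hφval v.1 v.2
    change Continuous (B.restrict φ)
    rw [this]
    exact (continuous_subtype_val.comp continuous_subtype_val).comp
      (h.symm.continuous.comp (continuous_inclusion hB))
  have hφinj : Set.InjOn φ B := by
    intro v hv w hw hvw
    rw [hφval v hv, hφval w hw] at hvw
    have h1 : (h.symm ⟨v, hB hv⟩ : ↥U) = h.symm ⟨w, hB hw⟩ :=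
      Subtype.ext (Subtype.ext hvw)
    have h2 : (⟨v, hB hv⟩ : ↥V) = ⟨w, hB hw⟩ := h.symm.injective h1
    exact congrArg Subtype.val h2
  set N := φ '' B with hN
  -- N \ {0} is preconnected
  have hNdiff : N \ {((0 : ℂ), (0 : ℂ))} = φ '' (B \ {v₀}) := by
    ext p
    constructor
    · rintro ⟨⟨v, hv, rfl⟩, hp⟩
      refine ⟨v, ⟨hv, ?_⟩, rfl⟩
      simp only [Set.mem_singleton_iff]
      rintro rfl
      exact hp (by simpa using hφv₀)
    · rintro ⟨v, ⟨hv, hvne⟩, rfl⟩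
      refine ⟨⟨v, hv, rfl⟩, ?_⟩
      simp only [Set.mem_singleton_iff]
      intro hcontra
      have : v = v₀ := hφinj hv (Metric.mem_ball_self hε) (by rw [hcontra, hφv₀])
      exact hvne (by simpa using this)
  have hconn : IsPreconnected (N \ {((0 : ℂ), (0 : ℂ))}) := by
    rw [hNdiff]
    exact (punctured_ball_preconnected v₀ hε).image φ (hφcont.mono Set.diff_subset)
  -- points of N on each punctured axis
  have hTN : ∀ x : axesWedge, x ∈ (Subtype.val ''
      ((fun u : ↥U => (h u : ℂ)) ⁻¹' B) : Set axesWedge) → (x : ℂ × ℂ) ∈ N := by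
    rintro x ⟨u, hu, rfl⟩
    refine ⟨(h u : ℂ), hu, ?_⟩
    rw [hφval _ hu]
    have : (⟨(h u : ℂ), hB hu⟩ : ↥V) = h u := Subtype.ext rfl
    rw [this, h.symm_apply_apply]
  set T : Set axesWedge := Subtype.val '' ((fun u : ↥U => (h u : ℂ)) ⁻¹' B) with hTdef
  have hTopen : IsOpen T :=
    hU.isOpenMap_subtype_val _
      ((h.continuous.subtype_val.comp continuous_id).isOpen_preimage B Metric.isOpen_ball)
  have hx₀T : x₀ ∈ T := ⟨⟨x₀, hx₀U⟩, Metric.mem_ball_self hε, rfl⟩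
  -- find small points on each axis inside N
  have haxis : ∃ t : ℂ, t ≠ 0 ∧ ((t, (0:ℂ)) ∈ N) ∧ (((0:ℂ), t) ∈ N) := by
    have f₁cont : Continuous (fun z : ℂ => (⟨(z, 0), Or.inr rfl⟩ : axesWedge)) :=
      Continuous.subtype_mk (continuous_id.prodMk continuous_const) _
    have f₂cont : Continuous (fun z : ℂ => (⟨(0, z), Or.inl rfl⟩ : axesWedge)) :=
      Continuous.subtype_mk (continuous_const.prodMk continuous_id) _
    have h₁ : IsOpen ((fun z : ℂ => (⟨(z, 0), Or.inr rfl⟩ : axesWedge)) ⁻¹' T) :=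
      hTopen.preimage f₁cont
    have h₂ : IsOpen ((fun z : ℂ => (⟨(0, z), Or.inl rfl⟩ : axesWedge)) ⁻¹' T) :=
      hTopen.preimage f₂cont
    have m₁ : (0 : ℂ) ∈ (fun z : ℂ => (⟨(z, 0), Or.inr rfl⟩ : axesWedge)) ⁻¹' T := by
      simpa [hx₀] using hx₀T
    have m₂ : (0 : ℂ) ∈ (fun z : ℂ => (⟨(0, z), Or.inl rfl⟩ : axesWedge)) ⁻¹' T := by
      simpa [hx₀] using hx₀T
    obtain ⟨δ₁, hδ₁, hball₁⟩ := Metric.isOpen_iff.1 h₁ 0 m₁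
    obtain ⟨δ₂, hδ₂, hball₂⟩ := Metric.isOpen_iff.1 h₂ 0 m₂
    set δ := min δ₁ δ₂ with hδdef
    have hδ : 0 < δ := lt_min hδ₁ hδ₂
    refine ⟨(δ / 2 : ℝ), ?_, ?_, ?_⟩
    · simp only [ne_eq, Complex.ofReal_eq_zero]
      positivity
    · have : ((δ / 2 : ℝ) : ℂ) ∈ Metric.ball (0:ℂ) δ₁ := by
        rw [Metric.mem_ball, dist_zero_right]
        simp only [Complex.norm_real, Real.norm_eq_abs, abs_of_pos (by positivity : (0:ℝ) < δ / 2)]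
        calc δ / 2 < δ := by linarith
        _ ≤ δ₁ := min_le_left _ _
      exact hTN _ (hball₁ this)
    · have : ((δ / 2 : ℝ) : ℂ) ∈ Metric.ball (0:ℂ) δ₂ := by
        rw [Metric.mem_ball, dist_zero_right]
        simp only [Complex.norm_real, Real.norm_eq_abs, abs_of_pos (by positivity : (0:ℝ) < δ / 2)]
        calc δ / 2 < δ := by linarith
        _ ≤ δ₂ := min_le_right _ _
      exact hTN _ (hball₂ this)
  obtain ⟨t, ht, htN₁, htN₂⟩ := haxis
  -- disconnect N \ {0} by the two open half-planes
  set O₁ : Set (ℂ × ℂ) := {p | p.1 ≠ 0} with hO₁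
  set O₂ : Set (ℂ × ℂ) := {p | p.2 ≠ 0} with hO₂
  have hO₁open : IsOpen O₁ := isOpen_ne.preimage continuous_fst
  have hO₂open : IsOpen O₂ := isOpen_ne.preimage continuous_snd
  have hcover : N \ {((0:ℂ),(0:ℂ))} ⊆ O₁ ∪ O₂ := by
    rintro p ⟨hp, hpne⟩
    by_contra hcon
    simp only [hO₁, hO₂, Set.mem_setOf_eq, not_not, Set.mem_union] at hcon
    push_neg at hcon
    exact hpne (by simp [Prod.ext_iff, not_or] at hcon ⊢; exact hcon)
  have hne₁ : ((N \ {((0:ℂ),(0:ℂ))}) ∩ O₁).Nonempty := by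
    refine ⟨(t, 0), ⟨htN₁, ?_⟩, ht⟩
    simp [Prod.ext_iff, ht]
  have hne₂ : ((N \ {((0:ℂ),(0:ℂ))}) ∩ O₂).Nonempty := by
    refine ⟨(0, t), ⟨htN₂, ?_⟩, ht⟩
    simp [Prod.ext_iff, ht]
  obtain ⟨p, ⟨⟨hpN, -⟩, hp₁, hp₂⟩⟩ := hconn O₁ O₂ hO₁open hO₂open hcover hne₁ hne₂
  obtain ⟨v, hv, rfl⟩ := hpN
  rcases hφW v hv with hax | hax
  · exact hp₁ hax
  · exact hp₂ hax
end
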